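/- Let φ₀ solve φ₀' + sin φ₀ = f with φ₀(0) = 0, and let P₀(t) = ∫₀ᵗ cos φ₀, Q₀(t) = ∫₀ᵗ e^{-P₀} sin φ₀. For any real constant C, the function φ defined (mod 2π) by exp(iφ) = exp(iφ₀)·(1 + C(Q₀ - i e^{-P₀}))/(1 + C(Q₀ + i e^{-P₀})) also solves φ' + sin φ = f. -/

import Mathlib

/-- If `φ₀` solves `φ' + sin φ = f` with `φ₀(0) = 0`, and `P₀, Q₀` are the
associated integrals, then for any real `C` (with nonvanishing denominator)
any function `φ` with
`exp(iφ) = exp(iφ₀)(1 + C(Q₀ - i e^{-P₀}))/(1 + C(Q₀ + i e^{-P₀}))`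
also solves `φ' + sin φ = f`. -/
theorem stmt2 (f φ₀ φ₀' P₀ Q₀ φ φ' : ℝ → ℝ) (C : ℝ)
    (hφ₀ : ∀ t, HasDerivAt φ₀ (φ₀' t) t)
    (hode₀ : ∀ t, φ₀' t + Real.sin (φ₀ t) = f t)
    (hφ₀0 : φ₀ 0 = 0)
    (hP : ∀ t, HasDerivAt P₀ (Real.cos (φ₀ t)) t) (hP0 : P₀ 0 = 0)
    (hQ : ∀ t, HasDerivAt Q₀ (Real.exp (-P₀ t) * Real.sin (φ₀ t)) t) (hQ0 : Q₀ 0 = 0)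
    (hden : ∀ t, 1 + (C : ℂ) * ((Q₀ t : ℂ) + Complex.I * Complex.exp (-(P₀ t : ℂ))) ≠ 0)
    (hφ : ∀ t, HasDerivAt φ (φ' t) t)
    (hrel : ∀ t, Complex.exp (Complex.I * φ t) =
      Complex.exp (Complex.I * φ₀ t) *
        ((1 + (C : ℂ) * ((Q₀ t : ℂ) - Complex.I * Complex.exp (-(P₀ t : ℂ)))) /
         (1 + (C : ℂ) * ((Q₀ t : ℂ) + Complex.I * Complex.exp (-(P₀ t : ℂ)))))) :
    ∀ t, φ' t + Real.sin (φ t) = f t := by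
  intro t
  have hb : Complex.exp (-(P₀ t : ℂ)) = ((Real.exp (-P₀ t) : ℝ) : ℂ) := by
    rw [← Complex.ofReal_neg, Complex.ofReal_exp]
  have hbd : HasDerivAt (fun s => Complex.exp (-(P₀ s : ℂ)))
      (Complex.exp (-(P₀ t:ℂ)) * -(Real.cos (φ₀ t):ℂ)) t := ((hP t).ofReal_comp.neg).cexp
  have hNd : HasDerivAt (fun s => 1 + (C:ℂ) * ((Q₀ s:ℂ) - Complex.I * Complex.exp (-(P₀ s:ℂ))))
      ((C:ℂ) * (((Real.exp (-P₀ t) * Real.sin (φ₀ t) : ℝ) : ℂ)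
        - Complex.I * (Complex.exp (-(P₀ t:ℂ)) * -(Real.cos (φ₀ t):ℂ)))) t :=
    ((((hQ t).ofReal_comp).sub (hbd.const_mul Complex.I)).const_mul _).const_add 1
  have hDd : HasDerivAt (fun s => 1 + (C:ℂ) * ((Q₀ s:ℂ) + Complex.I * Complex.exp (-(P₀ s:ℂ))))
      ((C:ℂ) * (((Real.exp (-P₀ t) * Real.sin (φ₀ t) : ℝ) : ℂ)
        + Complex.I * (Complex.exp (-(P₀ t:ℂ)) * -(Real.cos (φ₀ t):ℂ)))) t :=
    ((((hQ t).ofReal_comp).add (hbd.const_mul Complex.I)).const_mul _).const_add 1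
  have ha0 : HasDerivAt (fun s => Complex.exp (Complex.I * (φ₀ s:ℂ)))
      (Complex.exp (Complex.I*(φ₀ t:ℂ)) * (Complex.I * (φ₀' t:ℂ))) t :=
    (((hφ₀ t).ofReal_comp).const_mul Complex.I).cexp
  have hL : HasDerivAt (fun s => Complex.exp (Complex.I * (φ s:ℂ)))
      (Complex.exp (Complex.I*(φ t:ℂ)) * (Complex.I * (φ' t:ℂ))) t :=
    (((hφ t).ofReal_comp).const_mul Complex.I).cexp
  have hR := ha0.mul (hNd.div hDd (hden t))
  simp only [Pi.mul_def, Pi.div_def] at hR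
  rw [show (fun s => Complex.exp (Complex.I * (φ₀ s:ℂ)) *
      ((1 + (C:ℂ) * ((Q₀ s:ℂ) - Complex.I * Complex.exp (-(P₀ s:ℂ)))) /
       (1 + (C:ℂ) * ((Q₀ s:ℂ) + Complex.I * Complex.exp (-(P₀ s:ℂ))))))
      = (fun s => Complex.exp (Complex.I * (φ s:ℂ))) from (funext fun s => (hrel s).symm)] at hR
  have hder := hL.unique hR
  rw [hrel t] at hder
  rw [show ((Real.exp (-P₀ t) * Real.sin (φ₀ t) : ℝ) : ℂ)
      = Complex.exp (-(P₀ t:ℂ)) * ((Real.sin (φ₀ t):ℝ):ℂ) by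
        rw [Complex.ofReal_mul, ← hb]] at hder
  field_simp [hden t] at hder
  -- auxiliary facts
  have hD : 1 + (C:ℂ) * ((Q₀ t:ℂ) + Complex.I * Complex.exp (-(P₀ t:ℂ))) ≠ 0 := hden t
  have hDN : (starRingEnd ℂ) (1 + (C:ℂ)*((Q₀ t:ℂ) - Complex.I*Complex.exp (-(P₀ t:ℂ))))
      = 1 + (C:ℂ)*((Q₀ t:ℂ) + Complex.I*Complex.exp (-(P₀ t:ℂ))) := by
    rw [hb]
    simp only [map_add, map_one, map_mul, map_sub, Complex.conj_ofReal, Complex.conj_I]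
    ring
  have hNne : (1 + (C:ℂ)*((Q₀ t:ℂ) - Complex.I*Complex.exp (-(P₀ t:ℂ)))) ≠ 0 := by
    intro h
    exact hD (by rw [← hDN, h, map_zero])
  have ha : Complex.exp (Complex.I*(φ₀ t:ℂ))
      = Complex.cos (φ₀ t:ℂ) + Complex.sin (φ₀ t:ℂ) * Complex.I := by
    rw [mul_comm, Complex.exp_mul_I]
  have hpy0 : Complex.sin (φ₀ t:ℂ)^2 + Complex.cos (φ₀ t:ℂ)^2 = 1 := Complex.sin_sq_add_cos_sq _
  have hI2 : Complex.I^2 = -1 := Complex.I_sq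
  have h1 : (Complex.cos (φ t:ℂ) + Complex.sin (φ t:ℂ) * Complex.I) *
      (1 + (C:ℂ)*((Q₀ t:ℂ) + Complex.I*Complex.exp (-(P₀ t:ℂ))))
      = Complex.exp (Complex.I*(φ₀ t:ℂ)) *
        (1 + (C:ℂ)*((Q₀ t:ℂ) - Complex.I*Complex.exp (-(P₀ t:ℂ)))) := by
    rw [← Complex.exp_mul_I, mul_comm ((φ t:ℂ)) Complex.I, hrel t]
    field_simp
  have e2 : Complex.exp (-((φ t:ℂ) * Complex.I)) * Complex.exp ((φ t:ℂ) * Complex.I) = 1 := by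
    rw [← Complex.exp_add, neg_add_cancel, Complex.exp_zero]
  have e1 : Complex.exp (-((φ t:ℂ) * Complex.I))
      = Complex.cos (φ t:ℂ) - Complex.sin (φ t:ℂ) * Complex.I := by
    rw [← neg_mul, Complex.exp_mul_I, Complex.cos_neg, Complex.sin_neg, neg_mul, sub_eq_add_neg]
  rw [e1, mul_comm ((φ t:ℂ)) Complex.I, hrel t] at e2
  have h2 : (Complex.cos (φ t:ℂ) - Complex.sin (φ t:ℂ) * Complex.I) *
      (Complex.exp (Complex.I*(φ₀ t:ℂ)) *
        (1 + (C:ℂ)*((Q₀ t:ℂ) - Complex.I*Complex.exp (-(P₀ t:ℂ)))))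
      = 1 + (C:ℂ)*((Q₀ t:ℂ) + Complex.I*Complex.exp (-(P₀ t:ℂ))) := by
    field_simp at e2
    linear_combination e2
  -- abbreviations
  set u : ℂ := (C:ℂ) with hu
  set q : ℂ := (Q₀ t:ℂ) with hq
  set b : ℂ := Complex.exp (-(P₀ t:ℂ)) with hbb
  set a : ℂ := Complex.exp (Complex.I*(φ₀ t:ℂ)) with haa
  set s0 : ℂ := Complex.sin (φ₀ t:ℂ) with hs0
  set c0 : ℂ := Complex.cos (φ₀ t:ℂ) with hc0
  set s1 : ℂ := Complex.sin (φ t:ℂ) with hs1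
  set c1 : ℂ := Complex.cos (φ t:ℂ) with hc1
  have hane : a ≠ 0 := Complex.exp_ne_zero _
  have hM : (2*Complex.I*a*(1 + u*(q - Complex.I*b))*(1 + u*(q + Complex.I*b))
      *(1 + u*(q + Complex.I*b))^2) ≠ 0 := by
    exact mul_ne_zero (mul_ne_zero (mul_ne_zero (mul_ne_zero
      (mul_ne_zero two_ne_zero Complex.I_ne_zero) hane) hNne) hD) (pow_ne_zero _ hD)
  have keyC : ((φ' t:ℂ) + s1) = ((φ₀' t:ℂ) + s0) := by
    apply mul_right_cancel₀ hM
    have hS : ((Real.sin (φ₀ t) : ℝ) : ℂ) = s0 := by rw [hs0, Complex.ofReal_sin]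
    have hC : ((Real.cos (φ₀ t) : ℝ) : ℂ) = c0 := by rw [hc0, Complex.ofReal_cos]
    rw [hS, hC] at hder
    have f1 : 2*Complex.I*s0 = a - (c0 - Complex.I*s0) := by linear_combination (-1:ℂ) * ha
    have f2 : 2*c0 = a + (c0 - Complex.I*s0) := by linear_combination (-1:ℂ) * ha
    have hab : a * (c0 - Complex.I*s0) = 1 := by
      linear_combination (c0 - Complex.I*s0) * ha + hpy0 - s0^2 * hI2
    have hE : 2*a*(u*b*((1 + u*(q + Complex.I*b))*(s0 + Complex.I*c0) - (1 + u*(q - Complex.I*b))*(s0 - Complex.I*c0))) + a^2*(1 + u*(q - Complex.I*b))^2 - (1 + u*(q + Complex.I*b))^2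
        - 2*Complex.I*a*(1 + u*(q - Complex.I*b))*(1 + u*(q + Complex.I*b))*s0 = 0 := by
      linear_combination (2*(u*b)^2*a^2 - 2*(u*b)^2) * hI2 + (2*a*(u*b)^2 - a*(1 + u*(q - Complex.I*b))*(1 + u*(q + Complex.I*b))) * f1 + 2*a*(u*b)*Complex.I*(1+u*q) * f2 + (-2*(u*b)^2 + 2*Complex.I*(u*b)*(1+u*q) + (1 + u*(q - Complex.I*b))*(1 + u*(q + Complex.I*b))) * hab
    linear_combination (2*a*(1 + u*(q + Complex.I*b))^2) * hder + (a*(1 + u*(q - Complex.I*b))*(1 + u*(q + Complex.I*b))^2) * h1 - ((1 + u*(q + Complex.I*b))^3) * h2 + (1 + u*(q + Complex.I*b))^2 * hE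
  rw [← hode₀ t]
  have keyR : (((φ' t + Real.sin (φ t) : ℝ)):ℂ) = ((φ₀' t + Real.sin (φ₀ t) : ℝ):ℂ) := by
    push_cast [Complex.ofReal_sin]
    rw [← hs1, ← hs0]
    linear_combination keyC
  exact_mod_cast keyR
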